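/- For all m ≥ 0 and all z = (z₁,...,z_k) ∈ ℂ^k, the evaluations of the elementary and complete homogeneous symmetric polynomials at repeated tuples satisfy the reciprocity: the polynomial (in n) given by n ↦ e_m(z^n) evaluated at -n equals (-1)^m h_m(z^n), where z^n is the tuple z repeated n times. -/

import Mathlib

/-- The elementary symmetric polynomial `e_m` evaluated at a finite family `z : ι → ℂ`:
`e_m(z) = ∑_{S ⊆ ι, |S| = m} ∏_{i ∈ S} z i`. -/
noncomputable def esymEval {ι : Type*} [Fintype ι] [DecidableEq ι] (m : ℕ) (z : ι → ℂ) : ℂ :=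
  ∑ s ∈ Finset.powersetCard m (Finset.univ : Finset ι), ∏ i ∈ s, z i

/-- The complete homogeneous symmetric polynomial `h_m` evaluated at a finite family
`z : ι → ℂ`: the sum over all multisets of indices of size `m` of the corresponding
monomials, i.e. `h_m(z) = ∑_{i₁ ≤ ⋯ ≤ i_m} z_{i₁} ⋯ z_{i_m}`. -/
noncomputable def hsymEval {ι : Type*} [Fintype ι] [DecidableEq ι] (m : ℕ) (z : ι → ℂ) : ℂ :=
  ∑ s : Sym ι m, ((s : Multiset ι).map z).prod

open Finset

section Aux

/-- Coefficient of `(1 + z X)^n`. -/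
lemma coeff_one_add_pow (z : ℂ) (n c : ℕ) :
    PowerSeries.coeff c ((PowerSeries.C (R := ℂ) z * PowerSeries.X + 1)^n) = (n.choose c : ℂ) * z ^ c := by
  have key : ∀ j : ℕ, (PowerSeries.C (R := ℂ) z * PowerSeries.X)^j * ((1 : PowerSeries ℂ))^(n-j) * ((n.choose j : ℕ) : PowerSeries ℂ)
      = PowerSeries.C (R := ℂ) ((n.choose j : ℂ) * z^j) * PowerSeries.X ^ j := by
    intro j
    rw [mul_pow, one_pow, mul_one, ← map_natCast (PowerSeries.C (R := ℂ)) (n.choose j), ← map_pow, map_mul]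
    ring
  rw [add_pow]
  simp only [key, map_sum, PowerSeries.coeff_C_mul_X_pow]
  rw [Finset.sum_eq_single c]
  · by_cases h : c ≤ n
    · simp
    · rw [if_pos rfl]
  · intro b _ hb
    rw [if_neg (fun h => hb h.symm)]
  · intro h
    simp only [Finset.mem_range, not_lt] at h
    rw [if_pos rfl, Nat.choose_eq_zero_of_lt (by omega)]
    simp

/-- `e_m` as a power-series coefficient. -/
lemma esymEval_eq_coeff {ι : Type*} [Fintype ι] [DecidableEq ι] (m : ℕ) (w : ι → ℂ) :
    esymEval m w = PowerSeries.coeff m (∏ p : ι, (PowerSeries.C (R := ℂ) (w p) * PowerSeries.X + 1)) := by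
  rw [Finset.prod_add]
  simp only [Finset.prod_const_one, mul_one, Finset.prod_mul_distrib, Finset.prod_const, ← map_prod]
  rw [map_sum]
  simp only [PowerSeries.coeff_C_mul_X_pow]
  rw [esymEval, Finset.powersetCard_eq_filter, Finset.sum_filter]
  apply Finset.sum_congr rfl
  intro t _
  by_cases h : t.card = m
  · simp [h]
  · rw [if_neg h, if_neg (fun hh => h hh.symm)]

lemma sym_sum_card {ι : Type*} [Fintype ι] [DecidableEq ι] {m : ℕ} (s : Sym ι m) :
    Finset.univ.sum ⇑(Multiset.toFinsupp (s : Multiset ι)) = m := by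
  have h1 : Finsupp.toMultiset (Multiset.toFinsupp (s : Multiset ι)) = (s : Multiset ι) :=
    Multiset.toFinsupp_toMultiset _
  have h2 : (Multiset.toFinsupp (s : Multiset ι)).sum (fun _ => id)
      = Multiset.card (s : Multiset ι) := by
    rw [← Finsupp.card_toMultiset, h1]
  rw [Finsupp.sum_fintype _ _ (fun i => rfl)] at h2
  rw [Sym.card_coe] at h2
  exact h2

/-- `h_m` as a power-series coefficient. -/
lemma hsymEval_eq_coeff {ι : Type*} [Fintype ι] [DecidableEq ι] (m : ℕ) (w : ι → ℂ) :
    hsymEval m w = PowerSeries.coeff m (∏ p : ι, PowerSeries.mk (fun j => w p ^ j)) := by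
  rw [PowerSeries.coeff_prod]
  simp only [PowerSeries.coeff_mk]
  rw [hsymEval]
  refine Finset.sum_bij (fun s _ => Multiset.toFinsupp ((s : Sym ι m) : Multiset ι)) ?_ ?_ ?_ ?_
  · intro s _
    rw [Finset.mem_finsuppAntidiag]
    exact ⟨sym_sum_card s, Finset.subset_univ _⟩
  · intro a _ b _ h
    have : (a : Multiset ι) = b := by
      simpa using congrArg Finsupp.toMultiset h
    exact Sym.ext this
  · intro l hl
    rw [Finset.mem_finsuppAntidiag] at hl
    refine ⟨⟨Finsupp.toMultiset l, ?_⟩, Finset.mem_univ _, Finsupp.toMultiset_toFinsupp l⟩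
    rw [Finsupp.card_toMultiset, Finsupp.sum_fintype _ _ (fun i => rfl), ← hl.1]
    rfl
  · intro s _
    set f := Multiset.toFinsupp ((s : Sym ι m) : Multiset ι) with hf
    have hs : (s : Multiset ι) = Finsupp.toMultiset f := (Multiset.toFinsupp_toMultiset _).symm
    rw [hs, Finsupp.toMultiset_map, Finsupp.prod_toMultiset,
      Finsupp.prod_mapDomain_index (fun b => pow_zero _) (fun b m₁ m₂ => pow_add _ _ _),
      Finsupp.prod_fintype _ _ (fun i => pow_zero _)]

/-- Coefficient of the `n`-th power of the geometric series. -/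
lemma coeff_geom_pow (z : ℂ) (n c : ℕ) :
    PowerSeries.coeff c ((PowerSeries.mk (fun j => z ^ j)) ^ n)
      = (Nat.multichoose n c : ℂ) * z ^ c := by
  have h := hsymEval_eq_coeff (ι := Fin n) c (fun _ => z)
  rw [Finset.prod_const, Finset.card_univ, Fintype.card_fin] at h
  rw [← h, hsymEval]
  have : ∀ s : Sym (Fin n) c, ((s : Multiset (Fin n)).map (fun _ => z)).prod = z ^ c := by
    intro s
    rw [Multiset.map_const', Multiset.prod_replicate, Sym.card_coe]
  simp only [this, Finset.sum_const, Finset.card_univ, nsmul_eq_mul]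
  rw [Sym.card_sym_eq_multichoose, Fintype.card_fin]

lemma desc_eval_nat (n c : ℕ) :
    (descPochhammer ℂ c).eval ((n : ℂ)) = (c.factorial : ℂ) * (n.choose c : ℂ) := by
  rw [descPochhammer_eval_eq_descFactorial, Nat.descFactorial_eq_factorial_mul_choose]
  push_cast; ring

lemma desc_eval_neg (n c : ℕ) :
    (descPochhammer ℂ c).eval (-(n : ℂ))
      = (-1 : ℂ) ^ c * ((c.factorial : ℂ) * (Nat.multichoose n c : ℂ)) := by
  rw [descPochhammer_eval_eq_ascPochhammer]
  have h1 : (-(n:ℂ) - c + 1) = -((n:ℂ) + c - 1) := by ring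
  rw [h1, ascPochhammer_eval_neg_eq_descPochhammer]
  rcases Nat.eq_zero_or_pos (n + c) with h | h
  · obtain ⟨hn, hc⟩ := Nat.add_eq_zero.mp h
    subst hn; subst hc
    simp
  · have h2 : ((n:ℂ) + c - 1) = ((n + c - 1 : ℕ) : ℂ) := by
      have : (1:ℕ) ≤ n + c := h
      push_cast [Nat.cast_sub this]
      ring
    rw [h2, descPochhammer_eval_eq_descFactorial,
      Nat.descFactorial_eq_factorial_mul_choose, Nat.multichoose_eq]
    push_cast; ring

lemma esym_repeat (m k n : ℕ) (z : Fin k → ℂ) :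
    esymEval m (fun p : Fin n × Fin k => z p.2)
      = ∑ μ ∈ Finset.finsuppAntidiag (Finset.univ : Finset (Fin k)) m,
          ∏ i, (n.choose (μ i) : ℂ) * z i ^ (μ i) := by
  rw [esymEval_eq_coeff]
  have hp : (∏ p : Fin n × Fin k, (PowerSeries.C (R := ℂ) (z p.2) * PowerSeries.X + 1))
      = ∏ i : Fin k, (PowerSeries.C (R := ℂ) (z i) * PowerSeries.X + 1)^n := by
    rw [Fintype.prod_prod_type]
    have e1 : ∀ x : Fin n, ∏ y : Fin k, (PowerSeries.C (R := ℂ) (z (x, y).2) * PowerSeries.X + 1)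
        = ∏ y : Fin k, (PowerSeries.C (R := ℂ) (z y) * PowerSeries.X + 1) := fun x => rfl
    simp only [e1]
    rw [Finset.prod_const, Finset.card_univ, Fintype.card_fin, ← Finset.prod_pow]
  rw [hp, PowerSeries.coeff_prod]
  exact Finset.sum_congr rfl fun μ _ => Finset.prod_congr rfl fun i _ => coeff_one_add_pow _ _ _

lemma hsym_repeat (m k n : ℕ) (z : Fin k → ℂ) :
    hsymEval m (fun p : Fin n × Fin k => z p.2)
      = ∑ μ ∈ Finset.finsuppAntidiag (Finset.univ : Finset (Fin k)) m,
          ∏ i, (Nat.multichoose n (μ i) : ℂ) * z i ^ (μ i) := by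
  rw [hsymEval_eq_coeff]
  have hp : (∏ p : Fin n × Fin k, PowerSeries.mk (fun j => z p.2 ^ j))
      = ∏ i : Fin k, (PowerSeries.mk (fun j => z i ^ j))^n := by
    rw [Fintype.prod_prod_type]
    have e1 : ∀ x : Fin n, ∏ y : Fin k, PowerSeries.mk (fun j => z (x, y).2 ^ j)
        = ∏ y : Fin k, PowerSeries.mk (fun j => z y ^ j) := fun x => rfl
    simp only [e1]
    rw [Finset.prod_const, Finset.card_univ, Fintype.card_fin, ← Finset.prod_pow]
  rw [hp, PowerSeries.coeff_prod]
  exact Finset.sum_congr rfl fun μ _ => Finset.prod_congr rfl fun i _ => coeff_geom_pow _ _ _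

end Aux

/-- For `m ≥ 0` and `z ∈ ℂ^k`, the function `n ↦ e_m(z^n)` (with `z^n` the
tuple `z` repeated `n` times, here indexed by `Fin n × Fin k`) is a polynomial in `n`,
and this polynomial evaluated at `-n` equals `(-1)^m h_m(z^n)`. -/
theorem esym_hsym_reciprocity (m k : ℕ) (z : Fin k → ℂ) :
    ∃ E : Polynomial ℂ,
      (∀ n : ℕ, E.eval (n : ℂ) = esymEval m (fun p : Fin n × Fin k => z p.2)) ∧
      (∀ n : ℕ, E.eval (-(n : ℂ)) = (-1 : ℂ) ^ m * hsymEval m (fun p : Fin n × Fin k => z p.2)) := by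
  classical
  refine ⟨∑ μ ∈ Finset.finsuppAntidiag (Finset.univ : Finset (Fin k)) m,
    ∏ i, Polynomial.C (z i ^ (μ i) / ((μ i).factorial : ℂ)) * descPochhammer ℂ (μ i), ?_, ?_⟩
  · intro n
    rw [Polynomial.eval_finset_sum]
    simp only [Polynomial.eval_prod, Polynomial.eval_mul, Polynomial.eval_C]
    rw [esym_repeat]
    refine Finset.sum_congr rfl fun μ _ => Finset.prod_congr rfl fun i _ => ?_
    rw [desc_eval_nat]
    have hfac : (((μ i).factorial : ℕ) : ℂ) ≠ 0 := Nat.cast_ne_zero.2 (Nat.factorial_ne_zero _)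
    field_simp
  · intro n
    rw [Polynomial.eval_finset_sum]
    simp only [Polynomial.eval_prod, Polynomial.eval_mul, Polynomial.eval_C]
    rw [hsym_repeat, Finset.mul_sum]
    refine Finset.sum_congr rfl fun μ hμ => ?_
    have hsum : Finset.univ.sum ⇑μ = m := ((Finset.mem_finsuppAntidiag).1 hμ).1
    have step : ∀ i, z i ^ μ i / ((μ i).factorial : ℂ) * (descPochhammer ℂ (μ i)).eval (-(n:ℂ))
        = (-1 : ℂ)^(μ i) * ((Nat.multichoose n (μ i) : ℂ) * z i ^ μ i) := by
      intro i
      rw [desc_eval_neg]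
      have hfac : (((μ i).factorial : ℕ) : ℂ) ≠ 0 := Nat.cast_ne_zero.2 (Nat.factorial_ne_zero _)
      field_simp
    simp only [step]
    rw [Finset.prod_mul_distrib, Finset.prod_pow_eq_pow_sum, hsum]
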